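/- arXiv:1705.02969 — 5 statements merged into one kernel-verified Lean document; each statement's English description precedes it below -/
import Mathlib

section
/- Let λ ∈ (0,1), φ > 0 with λ + φ < 1, δ ≥ 0, β ≥ 0, ζ ∈ (0,1), and let {v_t}_{t ≥ t₀} be a nonnegative sequence satisfying v_{t+1} ≤ (λ + δζ^t) v_t + βζ^t for all t ≥ t₀, where t₀ is such that δζ^{t₀} ≤ φ. Then for all t ≥ t₀: v_{t+1} ≤ (λ + φ)^{t+1−t₀} v_{t₀} + β ∑_{τ=0}^{t−t₀} (λ + φ)^τ ζ^{t−τ}. -/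
/-- Deterministic recursion lemma: if `v_{t+1} ≤ (l + δζ^t) v_t + βζ^t` for `t ≥ t₀` with
`δζ^{t₀} ≤ φ`, then `v_{t+1} ≤ (l+φ)^{t+1-t₀} v_{t₀} + β ∑_{τ=0}^{t-t₀} (l+φ)^τ ζ^{t-τ}`. -/
theorem recursion_lemma_strongly_convex
    (l φ δ β ζ : ℝ) (hl0 : 0 < l) (hl1 : l < 1) (hφ : 0 < φ) (hlφ : l + φ < 1)
    (hδ : 0 ≤ δ) (hβ : 0 ≤ β) (hζ0 : 0 < ζ) (hζ1 : ζ < 1)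
    (t₀ : ℕ) (hδζ : δ * ζ ^ t₀ ≤ φ)
    (v : ℕ → ℝ) (hv0 : ∀ t, t₀ ≤ t → 0 ≤ v t)
    (hrec : ∀ t, t₀ ≤ t → v (t + 1) ≤ (l + δ * ζ ^ t) * v t + β * ζ ^ t) :
    ∀ t, t₀ ≤ t →
      v (t + 1) ≤ (l + φ) ^ (t + 1 - t₀) * v t₀
        + β * ∑ τ ∈ Finset.range (t - t₀ + 1), (l + φ) ^ τ * ζ ^ (t - τ) := by
  have hlφ0 : 0 ≤ l + φ := by linarith
  have key : ∀ t, t₀ ≤ t → v (t + 1) ≤ (l + φ) * v t + β * ζ ^ t := by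
    intro t ht
    have hζt : ζ ^ t ≤ ζ ^ t₀ := pow_le_pow_of_le_one hζ0.le hζ1.le ht
    have h1 : δ * ζ ^ t ≤ φ := le_trans (by nlinarith) hδζ
    calc v (t + 1) ≤ (l + δ * ζ ^ t) * v t + β * ζ ^ t := hrec t ht
      _ ≤ (l + φ) * v t + β * ζ ^ t := by
          have := hv0 t ht; nlinarith
  intro t ht
  induction t, ht using Nat.le_induction with
  | base =>
      simpa [Nat.succ_sub le_rfl, Nat.sub_self] using key t₀ le_rfl
  | succ t ht ih =>
      have h1 : t + 1 + 1 - t₀ = (t + 1 - t₀) + 1 := Nat.succ_sub (by omega)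
      have h2 : t + 1 - t₀ + 1 = (t - t₀ + 1) + 1 := by omega
      have hsum : ∑ τ ∈ Finset.range (t + 1 - t₀ + 1), (l + φ) ^ τ * ζ ^ (t + 1 - τ)
          = (l + φ) * ∑ τ ∈ Finset.range (t - t₀ + 1), (l + φ) ^ τ * ζ ^ (t - τ)
            + ζ ^ (t + 1) := by
        rw [h2, Finset.sum_range_succ' (fun τ => (l + φ) ^ τ * ζ ^ (t + 1 - τ)),
          Finset.mul_sum]
        simp only [Nat.succ_sub_succ, pow_succ, pow_zero, one_mul, Nat.sub_zero,
          Finset.mul_sum]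
        congr 1
        exact Finset.sum_congr rfl fun x _ => by ring
      calc v (t + 1 + 1) ≤ (l + φ) * v (t + 1) + β * ζ ^ (t + 1) :=
            key (t + 1) (by omega)
        _ ≤ (l + φ) * ((l + φ) ^ (t + 1 - t₀) * v t₀
              + β * ∑ τ ∈ Finset.range (t - t₀ + 1), (l + φ) ^ τ * ζ ^ (t - τ))
              + β * ζ ^ (t + 1) := by nlinarith [ih]
        _ = (l + φ) ^ (t + 1 + 1 - t₀) * v t₀
              + β * ∑ τ ∈ Finset.range (t + 1 - t₀ + 1), (l + φ) ^ τ * ζ ^ (t + 1 - τ) := by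
            rw [hsum, h1, pow_succ]; ring
end

section
/- Let X ⊆ ℝ^d be closed convex, f : ℝ^d → ℝ differentiable convex with L-Lipschitz gradient, φ : X → ℝ convex, g = f + φ with minimizer x* ∈ X of g over X. Fix y ∈ X, a vector G ∈ ℝ^d (an inexact gradient), α ∈ (0, 1/L), and let z = argmin_{x ∈ X} { f(y) + ⟨G, x − y⟩ + (1/(2α))‖x − y‖² + φ(x) }. Set ε = G − ∇f(y). Then for every x ∈ X: g(z) ≤ g(x) + (1/(2α))‖x − y‖² − (1/(2α))‖x − z‖² + ((L − 1/α)/2)‖z − y‖² + ⟨ε, x − z⟩. -/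
open Real
open scoped RealInnerProductSpace

open Set

variable {d : ℕ}

lemma line_hasDerivAt (f : EuclideanSpace ℝ (Fin d) → ℝ)
    (gr : EuclideanSpace ℝ (Fin d) → EuclideanSpace ℝ (Fin d))
    (hg : ∀ u, HasGradientAt f (gr u) u)
    (a v : EuclideanSpace ℝ (Fin d)) (t : ℝ) :
    HasDerivAt (fun s : ℝ => f (a + s • v)) ⟪gr (a + t • v), v⟫ t := by
  have hc : HasDerivAt (fun s : ℝ => a + s • v) v t := by
    simpa using ((hasDerivAt_id t).smul_const v).const_add a
  have hf := (hasGradientAt_iff_hasFDerivAt.mp (hg (a + t • v)))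
  have := hf.comp_hasDerivAt t hc
  simpa [InnerProductSpace.toDual_apply_apply, Function.comp_def] using this

lemma grad_convex_ineq (f : EuclideanSpace ℝ (Fin d) → ℝ)
    (gr : EuclideanSpace ℝ (Fin d) → EuclideanSpace ℝ (Fin d))
    (hg : ∀ u, HasGradientAt f (gr u) u) (hconv : ConvexOn ℝ Set.univ f)
    (a b : EuclideanSpace ℝ (Fin d)) :
    f a + ⟪gr a, b - a⟫ ≤ f b := by
  set v := b - a with hv
  have hcomp : ConvexOn ℝ (Set.univ : Set ℝ) (fun s : ℝ => f (a + s • v)) := by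
    have : (fun s : ℝ => f (a + s • v)) = f ∘ (AffineMap.lineMap a (a + v)) := by
      funext s; simp only [AffineMap.lineMap_apply, vsub_eq_sub, vadd_eq_add, add_sub_cancel_left, Function.comp]; rw [add_comm]
    rw [this]
    exact (hconv.comp_affineMap _).subset (fun x _ => Set.mem_univ x) convex_univ
  have hd : HasDerivAt (fun s : ℝ => f (a + s • v)) ⟪gr a, v⟫ 0 := by
    simpa using line_hasDerivAt f gr hg a v 0
  have := hcomp.le_slope_of_hasDerivAt (Set.mem_univ (0:ℝ)) (Set.mem_univ (1:ℝ))
    one_pos hd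
  rw [slope_def_field] at this
  have hab : a + (1:ℝ) • v = b := by rw [hv]; simp
  rw [show a + (0:ℝ) • v = a by simp, hab] at this
  rw [show ((1:ℝ) - 0) = 1 by norm_num, div_one] at this
  linarith

lemma descent_lemma (f : EuclideanSpace ℝ (Fin d) → ℝ)
    (gr : EuclideanSpace ℝ (Fin d) → EuclideanSpace ℝ (Fin d))
    (hg : ∀ u, HasGradientAt f (gr u) u)
    (L : ℝ) (hL : 0 < L)
    (hLip : ∀ u v, ‖gr u - gr v‖ ≤ L * ‖u - v‖)
    (a b : EuclideanSpace ℝ (Fin d)) :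
    f b ≤ f a + ⟪gr a, b - a⟫ + L / 2 * ‖b - a‖ ^ 2 := by
  set v := b - a with hv
  set h : ℝ → ℝ := fun t => f (a + t • v) - t * ⟪gr a, v⟫ - L * ‖v‖ ^ 2 * t ^ 2 / 2 with hh
  have hd : ∀ t : ℝ, HasDerivAt h (⟪gr (a + t • v), v⟫ - ⟪gr a, v⟫ - L * ‖v‖ ^ 2 * t) t := by
    intro t
    have h1 := line_hasDerivAt f gr hg a v t
    have h2 : HasDerivAt (fun t : ℝ => t * ⟪gr a, v⟫) ⟪gr a, v⟫ t := by
      simpa using (hasDerivAt_id t).mul_const ⟪gr a, v⟫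
    have h3 : HasDerivAt (fun t : ℝ => L * ‖v‖ ^ 2 * t ^ 2 / 2) (L * ‖v‖ ^ 2 * t) t := by
      have := ((hasDerivAt_pow 2 t).const_mul (L * ‖v‖ ^ 2)).div_const 2
      simpa [mul_comm, mul_assoc, mul_div_assoc] using this
      -- fix later if needed
    exact (h1.sub h2).sub h3
  have hanti : AntitoneOn h (Set.Icc (0:ℝ) 1) := by
    apply antitoneOn_of_deriv_nonpos (convex_Icc 0 1)
    · exact fun t _ => ((hd t).differentiableAt.continuousAt).continuousWithinAt
    · intro t ht
      exact ((hd t).differentiableAt).differentiableWithinAt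
    · intro t ht
      rw [interior_Icc] at ht
      rw [(hd t).deriv]
      have h1 : ⟪gr (a + t • v) - gr a, v⟫ ≤ ‖gr (a + t • v) - gr a‖ * ‖v‖ :=
        real_inner_le_norm _ _
      have h2 : ‖gr (a + t • v) - gr a‖ ≤ L * ‖t • v‖ := by
        have := hLip (a + t • v) a
        simpa using this
      have h3 : ‖t • v‖ = t * ‖v‖ := by
        rw [norm_smul, Real.norm_eq_abs, abs_of_pos ht.1]
      have h4 : ⟪gr (a + t • v) - gr a, v⟫ = ⟪gr (a + t • v), v⟫ - ⟪gr a, v⟫ :=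
        inner_sub_left _ _ _
      rw [h3] at h2
      have h5 : ‖gr (a + t • v) - gr a‖ * ‖v‖ ≤ L * t * ‖v‖ ^ 2 := by
        nlinarith [norm_nonneg v, norm_nonneg (gr (a + t • v) - gr a),
          mul_le_mul_of_nonneg_right h2 (norm_nonneg v)]
      linarith
  have := hanti (Set.left_mem_Icc.mpr one_pos.le) (Set.right_mem_Icc.mpr one_pos.le) one_pos.le
  have hab : a + (1:ℝ) • v = b := by rw [hv]; simp
  simp only [hh] at this
  rw [show a + (0:ℝ) • v = a by simp, hab] at this
  linarith

/-- Key one-step inequality for the inexact proximal-gradient/FISTA step: with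
`z = argmin_{x ∈ X} { f(y) + ⟨G, x - y⟩ + (1/(2α))‖x - y‖² + φ(x) }` and `ε = G - ∇f(y)`,
for every `x ∈ X`,
`g(z) ≤ g(x) + (1/(2α))‖x-y‖² - (1/(2α))‖x-z‖² + ((L - 1/α)/2)‖z-y‖² + ⟨ε, x - z⟩`. -/
theorem one_step_inexact_prox_gradient_inequality
    {d : ℕ} (X : Set (EuclideanSpace ℝ (Fin d))) (hXc : IsClosed X) (hX : Convex ℝ X)
    (f : EuclideanSpace ℝ (Fin d) → ℝ)
    (gradf : EuclideanSpace ℝ (Fin d) → EuclideanSpace ℝ (Fin d))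
    (hgrad : ∀ u, HasGradientAt f (gradf u) u)
    (hconv : ConvexOn ℝ Set.univ f)
    (L : ℝ) (hL : 0 < L)
    (hLip : ∀ u v, ‖gradf u - gradf v‖ ≤ L * ‖u - v‖)
    (φ : EuclideanSpace ℝ (Fin d) → ℝ) (hφ : ConvexOn ℝ X φ)
    (xstar : EuclideanSpace ℝ (Fin d)) (hxstarX : xstar ∈ X)
    (hmin : ∀ u ∈ X, f xstar + φ xstar ≤ f u + φ u)
    (y : EuclideanSpace ℝ (Fin d)) (hy : y ∈ X)
    (G : EuclideanSpace ℝ (Fin d))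
    (α : ℝ) (hα0 : 0 < α) (hαL : α < 1 / L)
    (z : EuclideanSpace ℝ (Fin d)) (hzX : z ∈ X)
    (hz : ∀ x ∈ X,
      f y + ⟪G, z - y⟫ + (1 / (2 * α)) * ‖z - y‖ ^ 2 + φ z
        ≤ f y + ⟪G, x - y⟫ + (1 / (2 * α)) * ‖x - y‖ ^ 2 + φ x) :
    ∀ x ∈ X,
      f z + φ z ≤ f x + φ x + (1 / (2 * α)) * ‖x - y‖ ^ 2 - (1 / (2 * α)) * ‖x - z‖ ^ 2
        + ((L - 1 / α) / 2) * ‖z - y‖ ^ 2 + ⟪G - gradf y, x - z⟫ := by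
  intro x hx
  -- variational inequality for the prox step
  set A : ℝ := ⟪G, x - z⟫ + (1 / α) * ⟪z - y, x - z⟫ + φ x - φ z with hA_def
  set B : ℝ := ‖x - z‖ ^ 2 / (2 * α) with hB_def
  have key : ∀ t ∈ Set.Ioc (0:ℝ) 1, 0 ≤ A + t * B := by
    intro t ht
    have hw_eq : (1 - t) • z + t • x = z + t • (x - z) := by module
    have hwX : z + t • (x - z) ∈ X := by
      rw [← hw_eq]
      exact hX hzX hx (by linarith [ht.2]) ht.1.le (by ring)
    have hφw : φ (z + t • (x - z)) ≤ (1 - t) * φ z + t * φ x := by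
      rw [← hw_eq]
      exact hφ.2 hzX hx (by linarith [ht.2]) ht.1.le (by ring)
    have hinner : ⟪G, z + t • (x - z) - y⟫ = ⟪G, z - y⟫ + t * ⟪G, x - z⟫ := by
      have : z + t • (x - z) - y = (z - y) + t • (x - z) := by module
      rw [this, inner_add_right, real_inner_smul_right]
    have hnorm : ‖z + t • (x - z) - y‖ ^ 2
        = ‖z - y‖ ^ 2 + 2 * (t * ⟪z - y, x - z⟫) + t ^ 2 * ‖x - z‖ ^ 2 := by
      have h1 : z + t • (x - z) - y = (z - y) + t • (x - z) := by module
      rw [h1, norm_add_sq_real, real_inner_smul_right, norm_smul, Real.norm_eq_abs,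
        abs_of_pos ht.1, mul_pow]
    have hmain := hz (z + t • (x - z)) hwX
    rw [hinner, hnorm] at hmain
    have hB2 : (1 / (2 * α)) * (2 * (t * ⟪z - y, x - z⟫))
        = t * ((1 / α) * ⟪z - y, x - z⟫) := by
      field_simp
    have hB3 : (1 / (2 * α)) * (t ^ 2 * ‖x - z‖ ^ 2) = t * (t * B) := by
      rw [hB_def]; field_simp
    have hstep : 0 ≤ t * (A + t * B) := by
      rw [mul_add, mul_add, hB2, hB3] at hmain
      simp only [hA_def]
      linarith [hφw, hmain]
    have hstep' : t * 0 ≤ t * (A + t * B) := by rw [mul_zero]; exact hstep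
    exact le_of_mul_le_mul_left hstep' ht.1
  have hA : 0 ≤ A := by
    have hcont : Filter.Tendsto (fun t : ℝ => A + t * B) (nhdsWithin 0 (Set.Ioi 0)) (nhds A) := by
      have hc : Continuous fun t : ℝ => A + t * B :=
        continuous_const.add (continuous_id.mul continuous_const)
      have := (hc.tendsto 0).mono_left (nhdsWithin_le_nhds (s := Set.Ioi (0:ℝ)))
      simpa using this
    exact ge_of_tendsto hcont
      (Filter.eventually_of_mem (Ioc_mem_nhdsGT_of_mem ⟨le_refl 0, one_pos⟩) key)
  -- norm identity
  have h7 : ⟪z - y, x - z⟫ = (‖x - y‖ ^ 2 - ‖x - z‖ ^ 2 - ‖z - y‖ ^ 2) / 2 := by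
    have h1 : (x - z) + (z - y) = x - y := by abel
    have := norm_add_sq_real (x - z) (z - y)
    rw [h1] at this
    rw [real_inner_comm]
    linarith
  rw [hA_def, h7] at hA
  -- smoothness and convexity inequalities
  have hS : f z ≤ f y + ⟪gradf y, z - y⟫ + L / 2 * ‖z - y‖ ^ 2 :=
    descent_lemma f gradf hgrad L hL hLip y z
  have hC : f y + ⟪gradf y, x - y⟫ ≤ f x := grad_convex_ineq f gradf hgrad hconv y x
  have hlin : ⟪gradf y, x - y⟫ = ⟪gradf y, x - z⟫ + ⟪gradf y, z - y⟫ := by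
    rw [← inner_add_right]
    congr 1
    abel
  rw [hlin] at hC
  have hsub : ⟪G - gradf y, x - z⟫ = ⟪G, x - z⟫ - ⟪gradf y, x - z⟫ := inner_sub_left _ _ _
  rw [hsub]
  have hα' : α ≠ 0 := ne_of_gt hα0
  have hc1 : (1 / α) * ((‖x - y‖ ^ 2 - ‖x - z‖ ^ 2 - ‖z - y‖ ^ 2) / 2)
      = (1 / (2 * α)) * ‖x - y‖ ^ 2 - (1 / (2 * α)) * ‖x - z‖ ^ 2
        - (1 / (2 * α)) * ‖z - y‖ ^ 2 := by
    have h : (1:ℝ) / α = 2 * (1 / (2 * α)) := by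
      rw [one_div, one_div, mul_inv, ← mul_assoc]
      norm_num
    rw [h]; ring
  rw [hc1] at hA
  have hc2 : ((L - 1 / α) / 2) * ‖z - y‖ ^ 2
      = L / 2 * ‖z - y‖ ^ 2 - (1 / (2 * α)) * ‖z - y‖ ^ 2 := by
    have h : (1:ℝ) / α = 2 * (1 / (2 * α)) := by
      rw [one_div, one_div, mul_inv, ← mul_assoc]
      norm_num
    rw [h]; ring
  rw [hc2]
  linarith
end

section
/- Let f : ℝ^d → ℝ be differentiable, c-strongly convex with L-Lipschitz gradient, φ : X → ℝ convex on a closed convex X ⊆ ℝ^d, and x* the unique minimizer of g = f + φ over X. Fix x ∈ X, G ∈ ℝ^d, α ∈ (0, 1/L), set ε = G − ∇f(x), and let x⁺ = argmin_{u ∈ X} { f(x) + ⟨G, u − x⟩ + (1/(2α))‖u − x‖² + φ(u) }. Then ‖x⁺ − x*‖² ≤ (1 − cα)‖x − x*‖² + (α²/(1 − Lα))‖ε‖² + 2α⟨ε, x* − x⟩. -/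
open Real
open scoped RealInnerProductSpace


lemma smooth_upper {E : Type*} [NormedAddCommGroup E] [InnerProductSpace ℝ E] [CompleteSpace E]
    (f : E → ℝ) (gradf : E → E) (hgrad : ∀ u, HasGradientAt f (gradf u) u)
    (L : ℝ) (hLip : ∀ u v, ‖gradf u - gradf v‖ ≤ L * ‖u - v‖)
    (u v : E) : f v ≤ f u + ⟪gradf u, v - u⟫ + (L / 2) * ‖v - u‖ ^ 2 := by
  set w := v - u with hw
  set a := ⟪gradf u, w⟫ with ha
  set χ : ℝ → ℝ := fun t => f u + t * a + (L * ‖w‖ ^ 2 / 2) * t ^ 2 - f (u + t • w) with hχdef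
  have hψ : ∀ t : ℝ, HasDerivAt (fun t : ℝ => f (u + t • w)) ⟪gradf (u + t • w), w⟫ t := by
    intro t
    have h1 : HasDerivAt (fun t : ℝ => u + t • w) w t := by
      simpa using ((hasDerivAt_id t).smul_const w).const_add u
    have h2 := (hgrad (u + t • w)).hasFDerivAt.comp_hasDerivAt t h1
    simp only [InnerProductSpace.toDual_apply_apply] at h2
    exact h2
  have hχ : ∀ t : ℝ, HasDerivAt χ (a + (L * ‖w‖ ^ 2) * t - ⟪gradf (u + t • w), w⟫) t := by
    intro t
    have h3 : HasDerivAt (fun t : ℝ => f u + t * a + (L * ‖w‖ ^ 2 / 2) * t ^ 2)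
        (a + (L * ‖w‖ ^ 2) * t) t := by
      have := (((hasDerivAt_id t).mul_const a).const_add (f u)).add
        (((hasDerivAt_pow 2 t)).const_mul (L * ‖w‖ ^ 2 / 2))
      convert this using 1
      · rfl
      · rfl
      · rfl
      ring
    exact h3.sub (hψ t)
  have hdiff : Differentiable ℝ χ := fun t => (hχ t).differentiableAt
  have hmono : MonotoneOn χ (Set.Icc 0 1) := by
    apply monotoneOn_of_deriv_nonneg (convex_Icc 0 1) hdiff.continuous.continuousOn
      hdiff.differentiableOn
    intro t ht
    rw [interior_Icc] at ht
    rw [(hχ t).deriv]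
    have h4 : ⟪gradf (u + t • w) - gradf u, w⟫ ≤ L * t * ‖w‖ ^ 2 := by
      calc ⟪gradf (u + t • w) - gradf u, w⟫ ≤ ‖gradf (u + t • w) - gradf u‖ * ‖w‖ :=
            real_inner_le_norm _ _
        _ ≤ (L * ‖(u + t • w) - u‖) * ‖w‖ := by
            have := hLip (u + t • w) u
            nlinarith [norm_nonneg w]
        _ = L * t * ‖w‖ ^ 2 := by
            rw [add_sub_cancel_left, norm_smul, Real.norm_eq_abs, abs_of_pos ht.1]; ring
    rw [inner_sub_left] at h4
    linarith
  have h01 := hmono (Set.left_mem_Icc.2 zero_le_one) (Set.right_mem_Icc.2 zero_le_one) zero_le_one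
  simp only [hχdef] at h01
  norm_num at h01
  have huv : u + w = v := by rw [hw]; abel
  rw [huv] at h01
  linarith


lemma three_point {E : Type*} [NormedAddCommGroup E] [InnerProductSpace ℝ E]
    {X : Set E} (hX : Convex ℝ X) {φ : E → ℝ} (hφ : ConvexOn ℝ X φ)
    {α : ℝ} (hα0 : 0 < α) (G x : E) {p s : E} (hp : p ∈ X) (hs : s ∈ X)
    (hplus : ∀ u ∈ X, ⟪G, p - x⟫ + (1 / (2 * α)) * ‖p - x‖ ^ 2 + φ p
        ≤ ⟪G, u - x⟫ + (1 / (2 * α)) * ‖u - x‖ ^ 2 + φ u) :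
    ⟪G, p - x⟫ + (1 / (2 * α)) * ‖p - x‖ ^ 2 + φ p + (1 / (2 * α)) * ‖s - p‖ ^ 2
      ≤ ⟪G, s - x⟫ + (1 / (2 * α)) * ‖s - x‖ ^ 2 + φ s := by
  set K := (1 / (2 * α)) * ‖s - p‖ ^ 2 with hK
  have hK0 : 0 ≤ K := by positivity
  -- key expansions
  have hGsx : ⟪G, s - x⟫ = ⟪G, p - x⟫ + ⟪G, s - p⟫ := by
    rw [← inner_add_right]; congr 1; abel
  have hnsx : ‖s - x‖ ^ 2 = ‖p - x‖ ^ 2 + 2 * ⟪p - x, s - p⟫ + ‖s - p‖ ^ 2 := by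
    have : s - x = (p - x) + (s - p) := by abel
    rw [this, norm_add_sq_real]
  have hstep : ∀ t : ℝ, 0 < t → t ≤ 1 →
      ⟪G, p - x⟫ + (1 / (2 * α)) * ‖p - x‖ ^ 2 + φ p + K
        ≤ ⟪G, s - x⟫ + (1 / (2 * α)) * ‖s - x‖ ^ 2 + φ s + t * K := by
    intro t ht0 ht1
    set ut := p + t • (s - p) with hut
    have hutX : ut ∈ X := by
      have : ut = (1 - t) • p + t • s := by rw [hut]; module
      rw [this]
      exact hX hp hs (by linarith) ht0.le (by ring)
    have hconv : φ ut ≤ (1 - t) * φ p + t * φ s := by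
      have : ut = (1 - t) • p + t • s := by rw [hut]; module
      rw [this]
      exact hφ.2 hp hs (by linarith) ht0.le (by ring)
    have h1 := hplus ut hutX
    have hGut : ⟪G, ut - x⟫ = ⟪G, p - x⟫ + t * ⟪G, s - p⟫ := by
      have : ut - x = (p - x) + t • (s - p) := by rw [hut]; abel
      rw [this, inner_add_right, real_inner_smul_right]
    have hnut : ‖ut - x‖ ^ 2
        = ‖p - x‖ ^ 2 + 2 * t * ⟪p - x, s - p⟫ + t ^ 2 * ‖s - p‖ ^ 2 := by
      have h : ut - x = (p - x) + t • (s - p) := by rw [hut]; abel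
      rw [h, norm_add_sq_real, real_inner_smul_right, norm_smul, Real.norm_eq_abs,
        mul_pow, sq_abs]
      ring
    rw [hGut, hnut] at h1
    have ht2 : t * (⟪G, p - x⟫ + (1 / (2 * α)) * ‖p - x‖ ^ 2 + φ p + K)
        ≤ t * (⟪G, s - x⟫ + (1 / (2 * α)) * ‖s - x‖ ^ 2 + φ s + t * K) := by
      rw [hGsx, hnsx, hK]
      nlinarith [h1, hconv]
    exact le_of_mul_le_mul_left ht2 ht0
  apply le_of_forall_pos_le_add
  intro e he
  have htK : (min 1 (e / (K + 1))) * K ≤ e := by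
    have h1 : min 1 (e / (K + 1)) ≤ e / (K + 1) := min_le_right _ _
    have h2 : (min 1 (e / (K + 1))) * K ≤ (e / (K + 1)) * K :=
      mul_le_mul_of_nonneg_right h1 hK0
    have h3 : (e / (K + 1)) * K ≤ e := by
      rw [div_mul_eq_mul_div, div_le_iff₀ (by linarith)]
      nlinarith
    linarith
  have := hstep (min 1 (e / (K + 1))) (lt_min one_pos (by positivity)) (min_le_left _ _)
  linarith

set_option maxHeartbeats 1000000 in
/-- One-step contraction for the inexact proximal gradient step with a `c`-strongly convex,
`L`-smooth `f`: with `ε = G - ∇f(x)` and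
`x⁺ = argmin_{u ∈ X} { f(x) + ⟨G, u - x⟩ + (1/(2α))‖u - x‖² + φ(u) }`,
`‖x⁺ - x*‖² ≤ (1 - cα)‖x - x*‖² + (α²/(1 - Lα))‖ε‖² + 2α⟨ε, x* - x⟩`. -/
theorem one_step_contraction_strongly_convex
    {d : ℕ} (X : Set (EuclideanSpace ℝ (Fin d))) (hXc : IsClosed X) (hX : Convex ℝ X)
    (f : EuclideanSpace ℝ (Fin d) → ℝ)
    (gradf : EuclideanSpace ℝ (Fin d) → EuclideanSpace ℝ (Fin d))
    (hgrad : ∀ u, HasGradientAt f (gradf u) u)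
    (c L : ℝ) (hc : 0 < c) (hL : 0 < L)
    (hLip : ∀ u v, ‖gradf u - gradf v‖ ≤ L * ‖u - v‖)
    (hsc : ∀ u v, f u + ⟪gradf u, v - u⟫ + (c / 2) * ‖v - u‖ ^ 2 ≤ f v)
    (φ : EuclideanSpace ℝ (Fin d) → ℝ) (hφ : ConvexOn ℝ X φ)
    (xstar : EuclideanSpace ℝ (Fin d)) (hxstarX : xstar ∈ X)
    (hmin : ∀ u ∈ X, f xstar + φ xstar ≤ f u + φ u)
    (x : EuclideanSpace ℝ (Fin d)) (hx : x ∈ X)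
    (G : EuclideanSpace ℝ (Fin d))
    (α : ℝ) (hα0 : 0 < α) (hαL : α < 1 / L)
    (xplus : EuclideanSpace ℝ (Fin d)) (hplusX : xplus ∈ X)
    (hplus : ∀ u ∈ X,
      f x + ⟪G, xplus - x⟫ + (1 / (2 * α)) * ‖xplus - x‖ ^ 2 + φ xplus
        ≤ f x + ⟪G, u - x⟫ + (1 / (2 * α)) * ‖u - x‖ ^ 2 + φ u) :
    ‖xplus - xstar‖ ^ 2 ≤ (1 - c * α) * ‖x - xstar‖ ^ 2
      + (α ^ 2 / (1 - L * α)) * ‖G - gradf x‖ ^ 2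
      + 2 * α * ⟪G - gradf x, xstar - x⟫ := by
  set p := xplus
  set s := xstar
  set gx := gradf x with hgx
  have hβ : 0 < 1 - L * α := by
    have : α * L < 1 := (lt_div_iff₀ hL).mp hαL
    linarith
  -- three-point inequality
  have hplus' : ∀ u ∈ X, ⟪G, p - x⟫ + (1 / (2 * α)) * ‖p - x‖ ^ 2 + φ p
      ≤ ⟪G, u - x⟫ + (1 / (2 * α)) * ‖u - x‖ ^ 2 + φ u := by
    intro u hu
    have := hplus u hu
    linarith
  have hA3 := three_point hX hφ hα0 G x hplusX hxstarX hplus'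
  have hA2 : 2 * α * ⟪G, p - x⟫ + ‖p - x‖ ^ 2 + 2 * α * φ p + ‖s - p‖ ^ 2
      ≤ 2 * α * ⟪G, s - x⟫ + ‖s - x‖ ^ 2 + 2 * α * φ s := by
    have h2 := mul_le_mul_of_nonneg_left hA3 (by positivity : (0:ℝ) ≤ 2 * α)
    have key : ∀ r : ℝ, 2 * α * ((1 / (2 * α)) * r) = r := fun r => by
      field_simp
    linarith [h2, key (‖p - x‖ ^ 2), key (‖s - x‖ ^ 2), key (‖s - p‖ ^ 2)]
  -- smoothness, strong convexity, optimality
  have hB := smooth_upper f gradf hgrad L hLip x p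
  have hC := hsc x s
  have hD := hmin p hplusX
  have hBCD : 2 * α * ⟪gx, s - x⟫ + α * c * ‖s - x‖ ^ 2 + 2 * α * φ s
      ≤ 2 * α * ⟪gx, p - x⟫ + α * L * ‖p - x‖ ^ 2 + 2 * α * φ p := by
    have hS : ⟪gx, s - x⟫ + (c / 2) * ‖s - x‖ ^ 2 + φ s
        ≤ ⟪gx, p - x⟫ + (L / 2) * ‖p - x‖ ^ 2 + φ p := by linarith
    nlinarith [mul_le_mul_of_nonneg_left hS (by positivity : (0:ℝ) ≤ 2 * α)]
  -- completing the square
  have hSq : -(1 - L * α) * ‖p - x‖ ^ 2 - 2 * α * ⟪G - gx, p - x⟫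
      ≤ α ^ 2 / (1 - L * α) * ‖G - gx‖ ^ 2 := by
    set β := 1 - L * α with hβdef
    have hexp : (0:ℝ) ≤ β ^ 2 * ‖p - x‖ ^ 2 + 2 * (β * α) * ⟪G - gx, p - x⟫
        + α ^ 2 * ‖G - gx‖ ^ 2 := by
      have h0 : (0:ℝ) ≤ ‖β • (p - x) + α • (G - gx)‖ ^ 2 := sq_nonneg _
      have h1 : ⟪p - x, G - gx⟫ = ⟪G - gx, p - x⟫ := real_inner_comm _ _
      rw [norm_add_sq_real, real_inner_smul_left, real_inner_smul_right, h1,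
        norm_smul, norm_smul, Real.norm_eq_abs, Real.norm_eq_abs,
        abs_of_pos hβ, abs_of_pos hα0, mul_pow, mul_pow] at h0
      linarith
    rw [div_mul_eq_mul_div, le_div_iff₀ hβ]
    nlinarith [hexp, sq_nonneg (β * ‖p - x‖)]
  -- inner product bookkeeping, multiplied by 2α
  have he1 : 2 * α * ⟪G - gx, s - x⟫ = 2 * α * ⟪G, s - x⟫ - 2 * α * ⟪gx, s - x⟫ := by
    rw [inner_sub_left]; ring
  have he2 : 2 * α * ⟪G - gx, p - x⟫ = 2 * α * ⟪G, p - x⟫ - 2 * α * ⟪gx, p - x⟫ := by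
    rw [inner_sub_left]; ring
  -- norm bookkeeping
  have hn1 : ‖p - s‖ ^ 2 = ‖s - p‖ ^ 2 := by rw [norm_sub_rev]
  have hn2 : ‖x - s‖ ^ 2 = ‖s - x‖ ^ 2 := by rw [norm_sub_rev]
  rw [hn1, hn2]
  linarith [hA2, hBCD, hSq, he1, he2]
end

section
/- Let f : ℝ^d → ℝ be differentiable, c-strongly convex with L-Lipschitz gradient, φ : X → ℝ convex on closed convex X ⊆ ℝ^d, x* the unique minimizer of g = f + φ over X, g* = g(x*). Fix x ∈ X, G ∈ ℝ^d, α ∈ (0, 1/L), ε = G − ∇f(x), and x⁺ = argmin_{u ∈ X} { f(x) + ⟨G, u − x⟩ + (1/(2α))‖u − x‖² + φ(u) }. Then g(x⁺) − g* ≤ ((1/α − c)/2)‖x − x*‖² + ⟨ε, x* − x⟩ + (α/(2(1 − Lα)))‖ε‖². -/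
open Real
open scoped RealInnerProductSpace

lemma descent_lemma_aux {F : Type*} [NormedAddCommGroup F] [InnerProductSpace ℝ F]
    [CompleteSpace F]
    (f : F → ℝ) (g : F → F) (hgrad : ∀ u, HasGradientAt f (g u) u)
    (L : ℝ) (hLip : ∀ u v, ‖g u - g v‖ ≤ L * ‖u - v‖) (x y : F) :
    f y ≤ f x + ⟪g x, y - x⟫ + L / 2 * ‖y - x‖ ^ 2 := by
  set v := y - x with hv
  have hline : ∀ t : ℝ, HasDerivAt (fun s : ℝ => f (x + s • v)) ⟪g (x + t • v), v⟫ t := by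
    intro t
    have h1 : HasDerivAt (fun s : ℝ => x + s • v) v t := by
      simpa using ((hasDerivAt_id t).smul_const v).const_add x
    have h2 := (hgrad (x + t • v)).hasFDerivAt
    simpa [InnerProductSpace.toDual_apply_apply, Function.comp_def] using h2.comp_hasDerivAt t h1
  set ψ : ℝ → ℝ := fun t => f (x + t • v) - (t * ⟪g x, v⟫ + L * ‖v‖ ^ 2 * t ^ 2 / 2) with hψdef
  have hψ : ∀ t, HasDerivAt ψ (⟪g (x + t • v), v⟫ - (⟪g x, v⟫ + L * ‖v‖ ^ 2 * t)) t := by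
    intro t
    have h2 : HasDerivAt (fun t : ℝ => t * ⟪g x, v⟫ + L * ‖v‖ ^ 2 * t ^ 2 / 2)
        (⟪g x, v⟫ + L * ‖v‖ ^ 2 * t) t := by
      have ha := (hasDerivAt_id t).mul_const (⟪g x, v⟫)
      have hb := ((hasDerivAt_pow 2 t).const_mul (L * ‖v‖ ^ 2)).div_const 2
      have hc := ha.add hb
      refine hc.congr_deriv ?_
      push_cast
      ring
    exact (hline t).sub h2
  have hanti : AntitoneOn ψ (Set.Icc 0 1) := by
    apply antitoneOn_of_deriv_nonpos (convex_Icc 0 1)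
    · exact fun t _ => (hψ t).continuousAt.continuousWithinAt
    · exact fun t _ => (hψ t).differentiableAt.differentiableWithinAt
    · intro t ht
      rw [interior_Icc] at ht
      rw [(hψ t).deriv]
      have hineq : ⟪g (x + t • v) - g x, v⟫ ≤ ‖g (x + t • v) - g x‖ * ‖v‖ :=
        real_inner_le_norm _ _
      have h2 : ‖g (x + t • v) - g x‖ ≤ L * (t * ‖v‖) := by
        have h := hLip (x + t • v) x
        simpa [norm_smul, abs_of_pos ht.1] using h
      have h3 : ⟪g (x + t • v), v⟫ - ⟪g x, v⟫ = ⟪g (x + t • v) - g x, v⟫ :=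
        (inner_sub_left _ _ _).symm
      nlinarith [norm_nonneg v, norm_nonneg (g (x + t • v) - g x), ht.1.le]
  have h01 := hanti (Set.left_mem_Icc.2 zero_le_one) (Set.right_mem_Icc.2 zero_le_one) zero_le_one
  have e1 : x + (1 : ℝ) • v = y := by simp [hv]
  have e0 : x + (0 : ℝ) • v = x := by simp
  simp only [hψdef, e1, e0] at h01
  nlinarith [h01]


set_option maxHeartbeats 1000000 in
/-- One-step optimality-gap bound for the inexact proximal gradient step with a `c`-strongly
convex, `L`-smooth `f`: with `ε = G - ∇f(x)` and
`x⁺ = argmin_{u ∈ X} { f(x) + ⟨G, u - x⟩ + (1/(2α))‖u - x‖² + φ(u) }`,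
`g(x⁺) - g* ≤ ((1/α - c)/2)‖x - x*‖² + ⟨ε, x* - x⟩ + (α/(2(1 - Lα)))‖ε‖²`. -/
theorem one_step_gap_strongly_convex
    {d : ℕ} (X : Set (EuclideanSpace ℝ (Fin d))) (hXc : IsClosed X) (hX : Convex ℝ X)
    (f : EuclideanSpace ℝ (Fin d) → ℝ)
    (gradf : EuclideanSpace ℝ (Fin d) → EuclideanSpace ℝ (Fin d))
    (hgrad : ∀ u, HasGradientAt f (gradf u) u)
    (c L : ℝ) (hc : 0 < c) (hL : 0 < L)
    (hLip : ∀ u v, ‖gradf u - gradf v‖ ≤ L * ‖u - v‖)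
    (hsc : ∀ u v, f u + ⟪gradf u, v - u⟫ + (c / 2) * ‖v - u‖ ^ 2 ≤ f v)
    (φ : EuclideanSpace ℝ (Fin d) → ℝ) (hφ : ConvexOn ℝ X φ)
    (xstar : EuclideanSpace ℝ (Fin d)) (hxstarX : xstar ∈ X)
    (hmin : ∀ u ∈ X, f xstar + φ xstar ≤ f u + φ u)
    (x : EuclideanSpace ℝ (Fin d)) (hx : x ∈ X)
    (G : EuclideanSpace ℝ (Fin d))
    (α : ℝ) (hα0 : 0 < α) (hαL : α < 1 / L)
    (xplus : EuclideanSpace ℝ (Fin d)) (hplusX : xplus ∈ X)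
    (hplus : ∀ u ∈ X,
      f x + ⟪G, xplus - x⟫ + (1 / (2 * α)) * ‖xplus - x‖ ^ 2 + φ xplus
        ≤ f x + ⟪G, u - x⟫ + (1 / (2 * α)) * ‖u - x‖ ^ 2 + φ u) :
    (f xplus + φ xplus) - (f xstar + φ xstar)
      ≤ ((1 / α - c) / 2) * ‖x - xstar‖ ^ 2 + ⟪G - gradf x, xstar - x⟫
        + (α / (2 * (1 - L * α))) * ‖G - gradf x‖ ^ 2 := by
  
  have hLα : 0 < 1 - L * α := by
    rw [lt_div_iff₀ hL] at hαL; nlinarith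
  set a := xplus - x with ha
  set b := xstar - x with hb
  set w := xstar - xplus with hw
  set ε := G - gradf x with hε
  have hwba : w = b - a := by rw [hw, ha, hb]; abel
  have hbaw : b = a + w := by rw [hwba]; abel
  -- scalar abbreviations
  -- optimality condition via limit t → 0⁺
  have hopt : 0 ≤ ⟪G, w⟫ + (1 / α) * ⟪a, w⟫ + φ xstar - φ xplus := by
    have hstep : ∀ t : ℝ, 0 < t → t ≤ 1 →
        0 ≤ ⟪G, w⟫ + (1 / α) * ⟪a, w⟫ + φ xstar - φ xplus + (t / (2 * α)) * ‖w‖ ^ 2 := by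
      intro t ht0 ht1
      have hmem : (1 - t) • xplus + t • xstar ∈ X :=
        hX hplusX hxstarX (by linarith) ht0.le (by ring)
      have hcomb : (1 - t) • xplus + t • xstar = xplus + t • w := by
        rw [hw, smul_sub, sub_smul, one_smul]; abel
      have hP := hplus _ hmem
      rw [hcomb] at hP
      have hφt : φ (xplus + t • w) ≤ (1 - t) * φ xplus + t * φ xstar := by
        have := hφ.2 hplusX hxstarX (by linarith : (0:ℝ) ≤ 1 - t) ht0.le (by ring)
        rwa [hcomb] at this
      have hux : xplus + t • w - x = a + t • w := by rw [ha]; abel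
      have hGut : ⟪G, xplus + t • w - x⟫ = ⟪G, a⟫ + t * ⟪G, w⟫ := by
        rw [hux, inner_add_right, real_inner_smul_right]
      have hnut : ‖xplus + t • w - x‖ ^ 2 = ‖a‖ ^ 2 + 2 * (t * ⟪a, w⟫) + t ^ 2 * ‖w‖ ^ 2 := by
        rw [hux, norm_add_sq_real, real_inner_smul_right, norm_smul]
        rw [Real.norm_eq_abs, abs_of_pos ht0]
        ring
      rw [hGut, hnut] at hP
      -- hP : f x + ⟪G,a⟫ + (1/(2α))‖a‖² + φ xplus ≤ f x + ⟪G,a⟫ + t⟪G,w⟫ + (1/(2α))(...) + φ(...)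
      have hPt : t * (φ xplus - φ xstar)
          ≤ t * (⟪G, w⟫ + (1 / α) * ⟪a, w⟫ + (t / (2 * α)) * ‖w‖ ^ 2) := by
        have h2α : (0:ℝ) < 2 * α := by linarith
        have hexp : (1 / (2 * α)) * (‖a‖ ^ 2 + 2 * (t * ⟪a, w⟫) + t ^ 2 * ‖w‖ ^ 2)
            = (1 / (2 * α)) * ‖a‖ ^ 2 + t * ((1 / α) * ⟪a, w⟫) + t * ((t / (2 * α)) * ‖w‖ ^ 2) := by
          field_simp
        rw [hexp] at hP
        nlinarith [hP, hφt]
      have := le_of_mul_le_mul_left (by linarith [hPt] : t * (φ xplus - φ xstar) ≤ t * (⟪G, w⟫ + (1 / α) * ⟪a, w⟫ + (t / (2 * α)) * ‖w‖ ^ 2)) ht0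
      linarith
    have h0 : (0:ℝ) ≤ ⟪G, w⟫ + (1 / α) * ⟪a, w⟫ + φ xstar - φ xplus := by
      apply le_of_forall_sub_le
      intro δ hδ
      set t : ℝ := min (1/2) (δ * α / (‖w‖ ^ 2 + 1)) with htdef
      have hwpos : (0:ℝ) < ‖w‖ ^ 2 + 1 := by positivity
      have ht0 : 0 < t := lt_min (by norm_num) (by positivity)
      have ht1 : t ≤ 1 := le_trans (min_le_left _ _) (by norm_num)
      have hkey := hstep t ht0 ht1
      have htle : t ≤ δ * α / (‖w‖ ^ 2 + 1) := min_le_right _ _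
      have hbound : (t / (2 * α)) * ‖w‖ ^ 2 ≤ δ := by
        have h1 : t * ‖w‖ ^ 2 ≤ δ * α := by
          calc t * ‖w‖ ^ 2 ≤ (δ * α / (‖w‖ ^ 2 + 1)) * ‖w‖ ^ 2 := by
                exact mul_le_mul_of_nonneg_right htle (sq_nonneg _)
            _ ≤ δ * α := by
                rw [div_mul_eq_mul_div, div_le_iff₀ hwpos]
                nlinarith [sq_nonneg ‖w‖]
        rw [div_mul_eq_mul_div, div_le_iff₀ (by linarith : (0:ℝ) < 2 * α)]
        nlinarith
      linarith
    exact h0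
  -- descent lemma
  have hdes : f xplus ≤ f x + ⟪gradf x, a⟫ + L / 2 * ‖a‖ ^ 2 :=
    descent_lemma_aux f gradf hgrad L hLip x xplus
  -- strong convexity at (x, xstar)
  have hsc' : f x + ⟪gradf x, b⟫ + (c / 2) * ‖b‖ ^ 2 ≤ f xstar := hsc x xstar
  -- inner product identities
  have hgw : ⟪G, w⟫ = ⟪gradf x, b⟫ - ⟪gradf x, a⟫ + ⟪ε, b⟫ - ⟪ε, a⟫ := by
    have h1 : ⟪G, w⟫ = ⟪G, b⟫ - ⟪G, a⟫ := by rw [hwba, inner_sub_right]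
    have h2 : ⟪ε, b⟫ = ⟪G, b⟫ - ⟪gradf x, b⟫ := by rw [hε, inner_sub_left]
    have h3 : ⟪ε, a⟫ = ⟪G, a⟫ - ⟪gradf x, a⟫ := by rw [hε, inner_sub_left]
    linarith
  have hbsq : ‖b‖ ^ 2 = ‖a‖ ^ 2 + 2 * ⟪a, w⟫ + ‖w‖ ^ 2 := by
    rw [hbaw, norm_add_sq_real]
  have hs2 : (1 / α) * ⟪a, w⟫
      = (1 / (2 * α)) * ‖b‖ ^ 2 - (1 / (2 * α)) * ‖a‖ ^ 2 - (1 / (2 * α)) * ‖w‖ ^ 2 := by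
    rw [hbsq]; field_simp; ring
  have hWnn : 0 ≤ (1 / (2 * α)) * ‖w‖ ^ 2 := by positivity
  -- Young's inequality
  have hγpos : 0 < 1 / α - L := by
    rw [lt_div_iff₀ hL] at hαL
    rw [sub_pos, lt_div_iff₀ hα0]
    nlinarith
  have hCS : -⟪ε, a⟫ ≤ ‖ε‖ * ‖a‖ := by
    have := abs_real_inner_le_norm ε a
    cases' abs_le.1 this with h1 h2
    linarith
  have hμγ : α / (2 * (1 - L * α)) = 1 / (2 * (1 / α - L)) := by
    rw [div_eq_div_iff (by linarith) (by positivity)]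
    field_simp
  have hyoung : ‖ε‖ * ‖a‖ ≤ (α / (2 * (1 - L * α))) * ‖ε‖ ^ 2 + ((1 / α - L) / 2) * ‖a‖ ^ 2 := by
    rw [hμγ]
    set γ := 1 / α - L with hγ
    have hexp : 1 / (2 * γ) * ‖ε‖ ^ 2 + (γ / 2) * ‖a‖ ^ 2 - ‖ε‖ * ‖a‖
        = 1 / (2 * γ) * (‖ε‖ - γ * ‖a‖) ^ 2 := by
      field_simp
      ring
    have hnn : 0 ≤ 1 / (2 * γ) * (‖ε‖ - γ * ‖a‖) ^ 2 := by positivity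
    linarith [hexp ▸ hnn]
  -- rewrite the goal norms
  have hxs : ‖x - xstar‖ = ‖b‖ := by rw [hb, norm_sub_rev]
  rw [hxs]
  have hgoalb : ⟪G - gradf x, xstar - x⟫ = ⟪ε, b⟫ := by rw [hε, hb]
  rw [hgoalb]
  have hgoale : ‖G - gradf x‖ = ‖ε‖ := by rw [hε]
  rw [hgoale]
  -- final combination
  have hLhalf : L / 2 * ‖a‖ ^ 2 - (1 / (2 * α)) * ‖a‖ ^ 2 = -(((1 / α - L) / 2) * ‖a‖ ^ 2) := by
    field_simp; ring
  have hgoalsplit : ((1 / α - c) / 2) * ‖b‖ ^ 2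
      = (1 / (2 * α)) * ‖b‖ ^ 2 - (c / 2) * ‖b‖ ^ 2 := by
    field_simp
  linarith [hdes, hopt, hgw, hsc', hs2, hWnn, hCS, hyoung, hLhalf, hgoalsplit]
end

section
/- Let A : Ξ → ℝ^{d×d} be a random matrix with square-integrable entries, b : Ξ → ℝ^d integrable, and define F(x,ξ) = (1/2)⟨x, A(ξ)x⟩ + ⟨b(ξ), x⟩ with ∇F(x,ξ) = (1/2)(A(ξ) + A(ξ)ᵀ)x + b(ξ). Suppose ∇f(x) = E[∇F(x,ξ)]. Define σ(x)² = E[‖∇F(x,ξ) − ∇f(x)‖²] and suppose b is deterministic and A(ξ) symmetric a.s. Let B = ∑_{i=1}^d Cov[A_i(ξ)] where A_i(ξ) is the i-th row of A(ξ). Then σ(x)² = ⟨x, Bx⟩ for all x ∈ ℝ^d, and consequently σ(x)² ≥ λ₊(B)‖x_B‖² where λ₊(B) is the smallest nonzero eigenvalue of B and x_B is the orthogonal projection of x onto the orthogonal complement of the kernel of B. -/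
open MeasureTheory ProbabilityTheory Real Matrix
open scoped RealInnerProductSpace

/-- Stochastic quadratic optimization with a random matrix (Example 1.1): for
`F(x,ξ) = (1/2)⟨x, A(ξ)x⟩ + ⟨b, x⟩` with `A(ξ)` a.s. symmetric, square-integrable entries
and `b` deterministic, the pointwise oracle variance satisfies `σ(x)² = ⟨x, Bx⟩` with
`B = ∑ᵢ Cov[Aᵢ(ξ)]`, and `σ(x)² ≥ λ₊(B)‖x_B‖²` where `λ₊(B)` lower-bounds every nonzero
eigenvalue of `B` and `x_B` is the orthogonal projection of `x` onto `(ker B)ᗮ`. -/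
theorem random_quadratic_oracle_variance
    {d : ℕ} {Ω : Type*} [MeasureSpace Ω] [IsProbabilityMeasure (ℙ : Measure Ω)]
    (A : Ω → Matrix (Fin d) (Fin d) ℝ)
    (hA : ∀ i j, MemLp (fun ω => A ω i j) 2 ℙ)
    (hsym : ∀ᵐ ω ∂ℙ, (A ω)ᵀ = A ω)
    (bvec : Fin d → ℝ)
    (Abar : Matrix (Fin d) (Fin d) ℝ) (hAbar : ∀ i j, Abar i j = ∫ ω, A ω i j)
    (B : Matrix (Fin d) (Fin d) ℝ)
    (hB : ∀ j k, B j k = ∑ i, ∫ ω, (A ω i j - Abar i j) * (A ω i k - Abar i k))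
    (σ2 : (Fin d → ℝ) → ℝ)
    (hσ2 : ∀ x : Fin d → ℝ,
      σ2 x = ∫ ω, ∑ i, ((A ω).mulVec x i - Abar.mulVec x i) ^ 2)
    (lamPlus : ℝ) (hlamPlus : 0 ≤ lamPlus)
    (hlam : ∀ (μ : ℝ) (v : EuclideanSpace ℝ (Fin d)), v ≠ 0 →
      Matrix.toEuclideanLin B v = μ • v → μ ≠ 0 → lamPlus ≤ μ) :
    ∀ x : EuclideanSpace ℝ (Fin d),
      σ2 x = dotProduct x (B.mulVec x) ∧
      lamPlus * ‖(Submodule.orthogonalProjection (LinearMap.ker (Matrix.toEuclideanLin B))ᗮ x :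
          EuclideanSpace ℝ (Fin d))‖ ^ 2 ≤ σ2 x := by
  classical
  have hcL2 : ∀ i j, MemLp (fun ω => A ω i j - Abar i j) 2 ℙ :=
    fun i j => (hA i j).sub (memLp_const _)
  have hint : ∀ i j k,
      Integrable (fun ω => (A ω i j - Abar i j) * (A ω i k - Abar i k)) ℙ := by
    intro i j k
    rw [← memLp_one_iff_integrable]
    have := MemLp.smul (𝕜 := ℝ) (p := 2) (q := 2) (r := 1) (hcL2 i k) (hcL2 i j)
    simpa [smul_eq_mul, Pi.mul_def, mul_comm] using this
  -- Part 1 : the variance formula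
  have key : ∀ y : Fin d → ℝ, σ2 y = dotProduct y (B.mulVec y) := by
    intro y
    rw [hσ2]
    have h1 : (fun ω => ∑ i, ((A ω).mulVec y i - Abar.mulVec y i) ^ 2)
        = fun ω => ∑ i, ∑ j, ∑ k,
          ((A ω i j - Abar i j) * (A ω i k - Abar i k)) * (y j * y k) := by
      funext ω
      refine Finset.sum_congr rfl fun i _ => ?_
      have h2 : (A ω).mulVec y i - Abar.mulVec y i
          = ∑ j, (A ω i j - Abar i j) * y j := by
        simp [Matrix.mulVec, dotProduct, sub_mul, Finset.sum_sub_distrib]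
      rw [h2, sq, Finset.sum_mul_sum]
      exact Finset.sum_congr rfl fun j _ => Finset.sum_congr rfl fun k _ => by ring
    rw [h1]
    have hint2 : ∀ (i j : Fin d), Integrable (fun ω =>
        ∑ k, ((A ω i j - Abar i j) * (A ω i k - Abar i k)) * (y j * y k)) ℙ :=
      fun i j => integrable_finset_sum _ fun k _ => (hint i j k).mul_const _
    have hint1 : ∀ i : Fin d, Integrable (fun ω =>
        ∑ j, ∑ k, ((A ω i j - Abar i j) * (A ω i k - Abar i k)) * (y j * y k)) ℙ :=
      fun i => integrable_finset_sum _ fun j _ => hint2 i j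
    rw [integral_finset_sum _ fun i _ => hint1 i]
    have hswap : ∀ i : Fin d, (∫ ω, ∑ j, ∑ k,
          ((A ω i j - Abar i j) * (A ω i k - Abar i k)) * (y j * y k))
        = ∑ j, ∑ k,
          (∫ ω, (A ω i j - Abar i j) * (A ω i k - Abar i k)) * (y j * y k) := by
      intro i
      rw [integral_finset_sum _ fun j _ => hint2 i j]
      refine Finset.sum_congr rfl fun j _ => ?_
      rw [integral_finset_sum _ fun k _ => (hint i j k).mul_const _]
      exact Finset.sum_congr rfl fun k _ => integral_mul_const _ _
    simp_rw [hswap]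
    have hrhs : dotProduct y (B.mulVec y) = ∑ j, ∑ k, ∑ i,
        (∫ ω, (A ω i j - Abar i j) * (A ω i k - Abar i k)) * (y j * y k) := by
      simp only [dotProduct, Matrix.mulVec, hB, Finset.sum_mul, Finset.mul_sum]
      exact Finset.sum_congr rfl fun j _ => Finset.sum_congr rfl fun k _ =>
        Finset.sum_congr rfl fun i _ => by ring
    rw [hrhs]
    exact Finset.sum_comm.trans (Finset.sum_congr rfl fun j _ => Finset.sum_comm)
  -- Part 2 : the eigenvalue lower bound
  have hBsym : B.IsHermitian := by
    ext j k
    simp only [Matrix.conjTranspose_apply, star_trivial]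
    rw [hB, hB]
    refine Finset.sum_congr rfl fun i _ => ?_
    congr 1; funext ω; ring
  have hTsym : (Matrix.toEuclideanLin B).IsSymmetric :=
    Matrix.isHermitian_iff_isSymmetric.mp hBsym
  set T := Matrix.toEuclideanLin B with hTdef
  have hinner : ∀ y : EuclideanSpace ℝ (Fin d),
      ⟪y, T y⟫ = dotProduct y (B.mulVec y) := by
    intro y
    simp only [hTdef, PiLp.inner_apply, Matrix.toEuclideanLin_apply, dotProduct,
      RCLike.inner_apply, conj_trivial]
    exact Finset.sum_congr rfl fun _ _ => mul_comm _ _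
  intro x
  refine ⟨key x, ?_⟩
  set K := LinearMap.ker T with hKdef
  set x1 : EuclideanSpace ℝ (Fin d) := (Submodule.orthogonalProjection Kᗮ x : EuclideanSpace ℝ (Fin d))
    with hx1def
  have hx1mem : x1 ∈ Kᗮ := (Submodule.orthogonalProjection Kᗮ x).2
  have hx0mem : x - x1 ∈ K := by
    have : x - x1 ∈ Kᗮᗮ := Submodule.sub_starProjection_mem_orthogonal (K := Kᗮ) x
    rwa [Submodule.orthogonal_orthogonal] at this
  have hTx : T x = T x1 := by
    have h0 : T (x - x1) = 0 := LinearMap.mem_ker.mp hx0mem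
    have h1 := map_sub T x x1
    rw [h0] at h1
    exact sub_eq_zero.mp h1.symm
  have hsplit : ⟪x, T x⟫ = ⟪x1, T x1⟫ := by
    have hx : x = (x - x1) + x1 := by abel
    calc ⟪x, T x⟫ = ⟪(x - x1) + x1, T x1⟫ := by rw [hTx, ← hx]
      _ = ⟪x - x1, T x1⟫ + ⟪x1, T x1⟫ := inner_add_left _ _ _
      _ = ⟪x1, T x1⟫ := by
          have : ⟪x - x1, T x1⟫ = ⟪T (x - x1), x1⟫ := (hTsym (x - x1) x1).symm
          rw [this, LinearMap.mem_ker.mp hx0mem, inner_zero_left, zero_add]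
  -- spectral decomposition
  have hn : Module.finrank ℝ (EuclideanSpace ℝ (Fin d)) = d := by
    simp [finrank_euclideanSpace]
  set e := hTsym.eigenvectorBasis hn with hedef
  set μ := hTsym.eigenvalues hn with hμdef
  have happ : ∀ i, T (e i) = μ i • e i := fun i =>
    hTsym.apply_eigenvectorBasis hn i
  have hexp : ⟪x1, T x1⟫ = ∑ i, μ i * ⟪e i, x1⟫ ^ 2 := by
    rw [← e.sum_inner_mul_inner x1 (T x1)]
    refine Finset.sum_congr rfl fun i _ => ?_
    have h1 : ⟪e i, T x1⟫ = μ i * ⟪e i, x1⟫ := by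
      rw [← hTsym (e i) x1, happ i, inner_smul_left]
      simp
    rw [h1, real_inner_comm x1 (e i)]
    ring
  have hnorm : ‖x1‖ ^ 2 = ∑ i, ⟪e i, x1⟫ ^ 2 := by
    rw [← real_inner_self_eq_norm_sq, ← e.sum_inner_mul_inner x1 x1]
    refine Finset.sum_congr rfl fun i _ => ?_
    rw [real_inner_comm x1 (e i)]; ring
  have hterm : ∀ i, lamPlus * ⟪e i, x1⟫ ^ 2 ≤ μ i * ⟪e i, x1⟫ ^ 2 := by
    intro i
    by_cases hμ0 : μ i = 0
    · have hker : e i ∈ K := LinearMap.mem_ker.mpr (by rw [happ i, hμ0, zero_smul])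
      have : ⟪e i, x1⟫ = 0 := hx1mem (e i) hker
      simp [this]
    · have hne : e i ≠ 0 := by
        intro h
        have := e.orthonormal.1 i
        rw [h] at this
        simp at this
      exact mul_le_mul_of_nonneg_right (hlam (μ i) (e i) hne (happ i) hμ0) (sq_nonneg _)
  calc lamPlus * ‖x1‖ ^ 2 = ∑ i, lamPlus * ⟪e i, x1⟫ ^ 2 := by
        rw [hnorm, Finset.mul_sum]
    _ ≤ ∑ i, μ i * ⟪e i, x1⟫ ^ 2 := Finset.sum_le_sum fun i _ => hterm i
    _ = ⟪x1, T x1⟫ := hexp.symm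
    _ = ⟪x, T x⟫ := hsplit.symm
    _ = dotProduct x (B.mulVec x) := hinner x
    _ = σ2 x := (key x).symm
end
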